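/- (Multiplicative embedding of JS into ℓ₂²) There is an absolute constant C > 0 such that for every integer d ≥ 1, every ε ∈ (0,1), and every finite set P ⊆ Δ_d with |P| = n ≥ 2, there exist an integer m ≤ C·n²·d³/ε² and a map φ : P → ℝ^m such that for all p, q ∈ P: (1−ε)·JS(p,q) ≤ ‖φ(p) − φ(q)‖₂² ≤ (1+ε)·JS(p,q). -/

import Mathlib

open Real MeasureTheory intervalIntegral

/-- One-dimensional Jensen–Shannon divergence (with `0·log 0 = 0`, `f_J(0,0) = 0`,
which hold automatically since `Real.log 0 = 0` and `0/0 = 0` in Lean). -/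
noncomputable def fJ (x y : ℝ) : ℝ :=
  x * Real.log (2 * x / (x + y)) + y * Real.log (2 * y / (x + y))

/-- The Jensen–Shannon divergence on the simplex `Δ_d`. -/
noncomputable def JS {d : ℕ} (p q : Fin d → ℝ) : ℝ := ∑ i, fJ (p i) (q i)

lemma lemA {ι : Type*} [Fintype ι] (a c : ι → ℝ) (ha : ∀ p, 0 < a p) :
    0 ≤ ∑ p, ∑ q, c p * c q / (a p + a q) := by
  have key : ∀ p q : ι, c p * c q / (a p + a q)
      = ∫ u in (0:ℝ)..1, c p * c q * u ^ (a p + a q - 1) := by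
    intro p q
    rw [intervalIntegral.integral_const_mul, integral_rpow (Or.inl (by linarith [ha p, ha q]))]
    have h1 : a p + a q - 1 + 1 = a p + a q := by ring
    rw [h1, Real.one_rpow, Real.zero_rpow (by linarith [ha p, ha q]), div_eq_mul_one_div]
    ring_nf
  have hint : ∀ p q : ι, IntervalIntegrable (fun u => c p * c q * u ^ (a p + a q - 1))
      volume 0 1 := fun p q =>
    (intervalIntegrable_rpow' (by linarith [ha p, ha q])).const_mul _
  have h0 : ∀ᵐ u ∂(volume : Measure ℝ), u ≠ (0:ℝ) := by
    rw [ae_iff]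
    simp only [not_not, Set.setOf_eq_eq_singleton]
    exact measure_singleton 0
  calc (0:ℝ) ≤ ∫ u in (0:ℝ)..1, ∑ p, ∑ q, c p * c q * u ^ (a p + a q - 1) := by
        apply intervalIntegral.integral_nonneg_of_ae_restrict zero_le_one
        filter_upwards [ae_restrict_of_ae h0, ae_restrict_mem measurableSet_Icc]
          with u hu0 hu
        have hu0' : (0:ℝ) < u := lt_of_le_of_ne hu.1 (Ne.symm hu0)
        have : ∑ p, ∑ q, c p * c q * u ^ (a p + a q - 1)
            = (∑ p, c p * u ^ (a p - 1/2)) ^ 2 := by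
          rw [sq, Finset.sum_mul_sum]
          refine Finset.sum_congr rfl fun p _ => Finset.sum_congr rfl fun q _ => ?_
          have h2 : a p + a q - 1 = (a p - 1/2) + (a q - 1/2) := by ring
          rw [h2, Real.rpow_add hu0']
          ring
        rw [this]
        positivity
    _ = ∑ p, ∑ q, c p * c q / (a p + a q) := by
        rw [intervalIntegral.integral_finset_sum]
        · exact Finset.sum_congr rfl fun p _ => by
            rw [intervalIntegral.integral_finset_sum]
            · exact Finset.sum_congr rfl fun q _ => (key p q).symm
            · exact fun q _ => hint p q
        · intro p _
          have := IntervalIntegrable.sum (f := fun q u => c p * c q * u ^ (a p + a q - 1)) Finset.univ (fun q _ => hint p q)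
          have heq : (fun u => ∑ q : ι, c p * c q * u ^ (a p + a q - 1))
              = ∑ q : ι, fun u => c p * c q * u ^ (a p + a q - 1) := by
            ext u; simp
          rw [heq]; exact this

lemma denom_pos {s v : ℝ} (hs : 0 < s) (hv0 : 0 ≤ v) (hv1 : v ≤ 1) :
    0 < v * s + (1 - v) := by
  rcases eq_or_lt_of_le hv1 with h | h
  · subst h; simpa using hs
  · have : 0 ≤ v * s := mul_nonneg hv0 hs.le
    linarith


lemma lemB (s : ℝ) (hs : 0 ≤ s) :
    s * Real.log s = ∫ v in (0:ℝ)..1, s * (s - 1) / (v * s + (1 - v)) := by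
  rcases eq_or_lt_of_le hs with h | hs
  · subst h
    simp
  · have hderiv : ∀ v ∈ Set.uIcc (0:ℝ) 1,
        HasDerivAt (fun v : ℝ => s * Real.log (v * s + (1 - v)))
          (s * (s - 1) / (v * s + (1 - v))) v := by
      intro v hv
      rw [Set.uIcc_of_le zero_le_one] at hv
      have hd : 0 < v * s + (1 - v) := denom_pos hs hv.1 hv.2
      have h1 : HasDerivAt (fun v : ℝ => v * s + (1 - v)) (s - 1) v := by
        have := ((hasDerivAt_id v).mul_const s).add ((hasDerivAt_id v).const_sub 1)
        exact this.congr_deriv (by ring)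
      have h2 := (Real.hasDerivAt_log hd.ne').comp v h1
      have h3 := h2.const_mul s
      exact h3.congr_deriv (by rw [div_eq_mul_inv]; ring)
    have hcont : ContinuousOn (fun v : ℝ => s * (s - 1) / (v * s + (1 - v)))
        (Set.uIcc (0:ℝ) 1) := by
      apply ContinuousOn.div continuousOn_const
      · fun_prop
      · intro v hv
        rw [Set.uIcc_of_le zero_le_one] at hv
        exact (denom_pos hs hv.1 hv.2).ne'
    rw [intervalIntegral.integral_eq_sub_of_hasDerivAt hderiv
      (hcont.intervalIntegrable)]
    simp



lemma pf {s v : ℝ} (hs : 0 ≤ s) (hv0 : 0 < v) (hv1 : v < 1) :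
    s * (s - 1) / (v * s + (1 - v))
      = s / v - 1 / v ^ 2 + ((1 - v) / v ^ 3) * (1 / (s + (1 - v) / v)) := by
  have hd : 0 < v * s + (1 - v) := by nlinarith [mul_nonneg hv0.le hs]
  have hd2 : 0 < s + (1 - v) / v := by
    have : 0 < (1 - v) / v := div_pos (by linarith) hv0
    linarith
  have e1 : 1 / (s + (1 - v) / v) = v / (v * s + (1 - v)) := by
    rw [div_eq_div_iff hd2.ne' hd.ne']
    field_simp
  rw [e1]
  generalize hD : v * s + (1 - v) = D at hd ⊢
  field_simp
  rw [← hD]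
  ring



lemma sum_vanish_left {ι : Type*} [Fintype ι] (c u : ι → ℝ) (hc : ∑ p, c p = 0) :
    ∑ p : ι, ∑ q : ι, c p * c q * u p = 0 := by
  have h : ∀ p : ι, ∑ q : ι, c p * c q * u p = c p * u p * ∑ q : ι, c q := by
    intro p; rw [Finset.mul_sum]; exact Finset.sum_congr rfl fun q _ => by ring
  simp [h, hc]

lemma sum_vanish_right {ι : Type*} [Fintype ι] (c u : ι → ℝ) (hc : ∑ p, c p = 0) :
    ∑ p : ι, ∑ q : ι, c p * c q * u q = 0 := by
  have h : ∀ p : ι, ∑ q : ι, c p * c q * u q = c p * ∑ q : ι, c q * u q := by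
    intro p; rw [Finset.mul_sum]; exact Finset.sum_congr rfl fun q _ => by ring
  rw [Finset.sum_congr rfl fun p _ => h p, ← Finset.sum_mul, hc, zero_mul]

lemma lemC {ι : Type*} [Fintype ι] (x c : ι → ℝ) (hx : ∀ p, 0 ≤ x p) (hc : ∑ p, c p = 0) :
    0 ≤ ∑ p, ∑ q, c p * c q * ((x p + x q) * Real.log (x p + x q)) := by
  classical
  have hint : ∀ s : ℝ, 0 ≤ s →
      IntervalIntegrable (fun v => s * (s - 1) / (v * s + (1 - v))) volume 0 1 := by
    intro s hs
    rcases eq_or_lt_of_le hs with h | hs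
    · subst h
      have : (fun v : ℝ => (0:ℝ) * ((0:ℝ) - 1) / (v * 0 + (1 - v))) = fun _ => (0:ℝ) := by
        funext v; simp
      rw [this]; exact intervalIntegrable_const
    · apply ContinuousOn.intervalIntegrable
      apply ContinuousOn.div continuousOn_const
      · fun_prop
      · intro v hv
        rw [Set.uIcc_of_le zero_le_one] at hv
        exact (denom_pos hs hv.1 hv.2).ne'
  have hxx : ∀ p q : ι, (0:ℝ) ≤ x p + x q := fun p q => add_nonneg (hx p) (hx q)
  have hint2 : ∀ p q : ι, IntervalIntegrable
      (fun v => c p * c q * ((x p + x q) * ((x p + x q) - 1) / (v * (x p + x q) + (1 - v))))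
      volume 0 1 := fun p q => (hint _ (hxx p q)).const_mul _
  have key : ∀ p q : ι, c p * c q * ((x p + x q) * Real.log (x p + x q))
      = ∫ v in (0:ℝ)..1,
          c p * c q * ((x p + x q) * ((x p + x q) - 1) / (v * (x p + x q) + (1 - v))) := by
    intro p q
    rw [intervalIntegral.integral_const_mul, ← lemB _ (hxx p q)]
  have h01 : ∀ᵐ v ∂(volume : Measure ℝ), v ∉ ({0, 1} : Set ℝ) := by
    rw [ae_iff]
    simp only [not_not]
    exact ((Set.finite_singleton (1:ℝ)).insert 0).measure_zero _
  calc (0:ℝ) ≤ ∫ v in (0:ℝ)..1, ∑ p, ∑ q,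
        c p * c q * ((x p + x q) * ((x p + x q) - 1) / (v * (x p + x q) + (1 - v))) := by
        apply intervalIntegral.integral_nonneg_of_ae_restrict zero_le_one
        filter_upwards [ae_restrict_of_ae h01, ae_restrict_mem measurableSet_Icc]
          with v hv01 hv
        simp only [Set.mem_insert_iff, Set.mem_singleton_iff, not_or] at hv01
        have hv0 : (0:ℝ) < v := lt_of_le_of_ne hv.1 (Ne.symm hv01.1)
        have hv1 : v < 1 := lt_of_le_of_ne hv.2 hv01.2
        have per : ∀ p q : ι,
            c p * c q * ((x p + x q) * ((x p + x q) - 1) / (v * (x p + x q) + (1 - v)))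
            = (c p * c q * (x p + x q)) * v⁻¹ - (c p * c q) * (v ^ 2)⁻¹
              + ((1 - v) / v ^ 3) * (c p * c q / ((x p + x q) + (1 - v) / v)) := by
          intro p q
          rw [pf (hxx p q) hv0 hv1]
          have hd2 : (0:ℝ) < (x p + x q) + (1 - v) / v := by
            have : 0 < (1 - v) / v := div_pos (by linarith) hv0
            have := hxx p q
            linarith
          field_simp
        rw [Finset.sum_congr rfl fun p _ => Finset.sum_congr rfl fun q _ => per p q]
        have total : ∑ p : ι, ∑ q : ι,
            ((c p * c q * (x p + x q)) * v⁻¹ - (c p * c q) * (v ^ 2)⁻¹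
              + ((1 - v) / v ^ 3) * (c p * c q / ((x p + x q) + (1 - v) / v)))
            = (∑ p : ι, ∑ q : ι, c p * c q * (x p + x q)) * v⁻¹
              - (∑ p : ι, ∑ q : ι, c p * c q) * (v ^ 2)⁻¹
              + ((1 - v) / v ^ 3) * (∑ p : ι, ∑ q : ι, c p * c q / ((x p + x q) + (1 - v) / v)) := by
          simp [Finset.sum_add_distrib, Finset.sum_sub_distrib, Finset.sum_mul, Finset.mul_sum]
        rw [total]
        have hz1 : ∑ p : ι, ∑ q : ι, c p * c q * (x p + x q) = 0 := by
          have h2 : ∀ p q : ι, c p * c q * (x p + x q) = c p * c q * x p + c p * c q * x q := by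
            intro p q; ring
          rw [Finset.sum_congr rfl fun p _ => Finset.sum_congr rfl fun q _ => h2 p q]
          rw [Finset.sum_congr rfl fun p _ => Finset.sum_add_distrib, Finset.sum_add_distrib,
            sum_vanish_left c x hc, sum_vanish_right c x hc, add_zero]
        have hz2 : ∑ p : ι, ∑ q : ι, c p * c q = 0 := by
          rw [← Finset.sum_mul_sum, hc, zero_mul]
        rw [hz1, hz2, zero_mul, zero_mul, sub_zero, zero_add]
        apply mul_nonneg
        · have h1v : (0:ℝ) < 1 - v := by linarith
          positivity
        · have hpos : ∀ p : ι, 0 < x p + (1 - v) / v / 2 := by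
            intro p
            have h1 : 0 < (1 - v) / v := div_pos (by linarith) hv0
            have := hx p
            linarith
          have h := lemA (fun p => x p + (1 - v) / v / 2) c hpos
          have harg : ∀ p q : ι, c p * c q / ((x p + (1 - v) / v / 2) + (x q + (1 - v) / v / 2))
              = c p * c q / ((x p + x q) + (1 - v) / v) := by
            intro p q
            congr 1
            ring
          rw [Finset.sum_congr rfl fun p _ => Finset.sum_congr rfl fun q _ => harg p q] at h
          exact h
    _ = ∑ p, ∑ q, c p * c q * ((x p + x q) * Real.log (x p + x q)) := by
        rw [intervalIntegral.integral_finset_sum]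
        · exact Finset.sum_congr rfl fun p _ => by
            rw [intervalIntegral.integral_finset_sum]
            · exact Finset.sum_congr rfl fun q _ => (key p q).symm
            · exact fun q _ => hint2 p q
        · intro p _
          have h := IntervalIntegrable.sum (f := fun q v =>
            c p * c q * ((x p + x q) * ((x p + x q) - 1) / (v * (x p + x q) + (1 - v))))
            Finset.univ (fun q _ => hint2 p q)
          have heq : (fun v => ∑ q : ι,
              c p * c q * ((x p + x q) * ((x p + x q) - 1) / (v * (x p + x q) + (1 - v))))
              = ∑ q : ι, fun v =>
              c p * c q * ((x p + x q) * ((x p + x q) - 1) / (v * (x p + x q) + (1 - v))) := by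
            ext v; simp
          rw [heq]; exact h

lemma fJ_eq (x y : ℝ) (hx : 0 ≤ x) (hy : 0 ≤ y) :
    fJ x y = x * Real.log (2 * x) + y * Real.log (2 * y) - (x + y) * Real.log (x + y) := by
  unfold fJ
  rcases eq_or_lt_of_le hx with h | hx'
  · subst h
    rcases eq_or_lt_of_le hy with h | hy'
    · subst h; simp
    · have h2 : 2 * y / (0 + y) = 2 := by field_simp; ring
      have h3 : Real.log (2 * y) = Real.log 2 + Real.log y :=
        Real.log_mul two_ne_zero hy'.ne'
      rw [h2, h3]
      simp only [zero_mul, zero_add]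
      ring
  · rcases eq_or_lt_of_le hy with h | hy'
    · subst h
      have h2 : 2 * x / (x + 0) = 2 := by field_simp; ring
      have h3 : Real.log (2 * x) = Real.log 2 + Real.log x :=
        Real.log_mul two_ne_zero hx'.ne'
      rw [h2, h3]
      simp only [zero_mul, add_zero, zero_add]
      ring
    · have hxy : (0:ℝ) < x + y := by linarith
      rw [Real.log_div (by positivity) hxy.ne', Real.log_div (by positivity) hxy.ne']
      ring

lemma fJ_symm (x y : ℝ) : fJ x y = fJ y x := by
  unfold fJ
  rw [add_comm y x]
  ring

lemma fJ_self (x : ℝ) : fJ x x = 0 := by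
  unfold fJ
  rcases eq_or_ne x 0 with h | h
  · subst h; norm_num
  · have h2 : 2 * x / (x + x) = 1 := by
      rw [div_eq_one_iff_eq (by simpa using fun hh => h hh)]
      ring
    rw [h2]
    simp

lemma JS_symm {d : ℕ} (p q : Fin d → ℝ) : JS p q = JS q p :=
  Finset.sum_congr rfl fun i _ => fJ_symm _ _

lemma JS_self {d : ℕ} (p : Fin d → ℝ) : JS p p = 0 := by
  unfold JS
  simp [fJ_self]

lemma js_negtype {d : ℕ} {ι : Type*} [Fintype ι] (pts : ι → (Fin d → ℝ))
    (hpts : ∀ i, pts i ∈ stdSimplex ℝ (Fin d)) (c : ι → ℝ) (hc : ∑ i, c i = 0) :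
    ∑ p, ∑ q, c p * c q * JS (pts p) (pts q) ≤ 0 := by
  have hswap : ∑ p, ∑ q, c p * c q * JS (pts p) (pts q)
      = ∑ i : Fin d, ∑ p, ∑ q, c p * c q * fJ (pts p i) (pts q i) := by
    unfold JS
    simp only [Finset.mul_sum]
    rw [Finset.sum_congr rfl fun p _ => Finset.sum_comm (s := Finset.univ) (t := Finset.univ)
      (f := fun (q : ι) (i : Fin d) => c p * c q * fJ (pts p i) (pts q i))]
    exact Finset.sum_comm (s := Finset.univ) (t := Finset.univ)
      (f := fun (p : ι) (i : Fin d) => ∑ q : ι, c p * c q * fJ (pts p i) (pts q i))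
  rw [hswap]
  apply Finset.sum_nonpos
  intro i _
  have hxi : ∀ p : ι, 0 ≤ pts p i := fun p => (hpts p).1 i
  have per : ∀ p q : ι, c p * c q * fJ (pts p i) (pts q i)
      = c p * c q * ((pts p i) * Real.log (2 * pts p i))
        + c p * c q * ((pts q i) * Real.log (2 * pts q i))
        - c p * c q * ((pts p i + pts q i) * Real.log (pts p i + pts q i)) := by
    intro p q
    rw [fJ_eq _ _ (hxi p) (hxi q)]
    ring
  rw [Finset.sum_congr rfl fun p _ => Finset.sum_congr rfl fun q _ => per p q]
  have e1 : ∑ p : ι, ∑ q : ι,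
      (c p * c q * ((pts p i) * Real.log (2 * pts p i))
        + c p * c q * ((pts q i) * Real.log (2 * pts q i))
        - c p * c q * ((pts p i + pts q i) * Real.log (pts p i + pts q i)))
      = ∑ p : ι, ∑ q : ι, c p * c q * ((pts p i) * Real.log (2 * pts p i))
        + ∑ p : ι, ∑ q : ι, c p * c q * ((pts q i) * Real.log (2 * pts q i))
        - ∑ p : ι, ∑ q : ι, c p * c q * ((pts p i + pts q i) * Real.log (pts p i + pts q i)) := by
    simp [Finset.sum_add_distrib, Finset.sum_sub_distrib]
  rw [e1, sum_vanish_left c _ hc, sum_vanish_right c _ hc]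
  have := lemC (fun p => pts p i) c hxi hc
  simp only [zero_add, zero_sub, neg_nonpos]
  exact this

theorem js_embed {d n : ℕ} (hn : 2 ≤ n) (P : Finset (Fin d → ℝ))
    (hP : ∀ p ∈ P, p ∈ stdSimplex ℝ (Fin d)) (hcard : P.card = n) :
    ∃ φ : (Fin d → ℝ) → EuclideanSpace ℝ (Fin n),
      ∀ p ∈ P, ∀ q ∈ P, ‖φ p - φ q‖ ^ 2 = JS p q := by
  classical
  have hne : P.Nonempty := Finset.card_pos.mp (by omega)
  obtain ⟨o, ho⟩ := hne
  set ι := {p // p ∈ P} with hι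
  set o' : ι := ⟨o, ho⟩ with ho'
  set D : ι → ι → ℝ := fun p q => JS p.1 q.1 with hD
  have hsymm : ∀ p q : ι, D p q = D q p := fun p q => JS_symm _ _
  have hself : ∀ p : ι, D p p = 0 := fun p => JS_self _
  set K : Matrix ι ι ℝ := Matrix.of fun p q => (D p o' + D o' q - D p q) / 2 with hKdef
  have hK : K.PosSemidef := by
    rw [Matrix.posSemidef_iff_dotProduct_mulVec]
    constructor
    · ext p q
      simp only [Matrix.conjTranspose_apply, Matrix.of_apply, star_trivial, hKdef]
      rw [hsymm q o', hsymm o' p, hsymm q p]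
      ring
    · intro y
      set s : ℝ := ∑ p, y p with hs
      set cc : ι → ℝ := fun p => y p - (if p = o' then s else 0) with hccdef
      have hcc : ∑ p, cc p = 0 := by
        simp only [hccdef, Finset.sum_sub_distrib]
        rw [Finset.sum_ite_eq' Finset.univ o' (fun _ => s), if_pos (Finset.mem_univ o')]
        simp [hs]
      have hneg : ∑ p, ∑ q, cc p * cc q * D p q ≤ 0 :=
        js_negtype (fun p : ι => p.1) (fun p => hP p.1 p.2) cc hcc
      set T : ℝ := ∑ p, y p * D p o' with hT
      set U : ℝ := ∑ q, y q * D o' q with hU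
      set A : ℝ := ∑ p, y p * ∑ q, y q * D p q with hA
      -- expansion of the c-quadratic form
      have inner1 : ∀ p : ι, ∑ q, cc p * cc q * D p q
          = cc p * (∑ q, y q * D p q) - cc p * (s * D p o') := by
        intro p
        have h : ∀ q : ι, cc p * cc q * D p q
            = cc p * (y q * D p q) - (if q = o' then cc p * (s * D p q) else 0) := by
          intro q
          by_cases hq : q = o'
          · simp only [hccdef, if_pos hq]; ring
          · simp only [hccdef, if_neg hq]; ring
        rw [Finset.sum_congr rfl fun q _ => h q, Finset.sum_sub_distrib, ← Finset.mul_sum,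
          Finset.sum_ite_eq' Finset.univ o' (fun q => cc p * (s * D p q)),
          if_pos (Finset.mem_univ o')]
      have E : ∑ p, ∑ q, cc p * cc q * D p q = A - s * U - s * T := by
        rw [Finset.sum_congr rfl fun p _ => inner1 p, Finset.sum_sub_distrib]
        have inner2 : ∀ p : ι, cc p * (∑ q, y q * D p q)
            = y p * (∑ q, y q * D p q)
              - (if p = o' then s * (∑ q, y q * D p q) else 0) := by
          intro p
          by_cases hp : p = o'
          · simp only [hccdef, if_pos hp]; ring
          · simp only [hccdef, if_neg hp]; ring
        have inner3 : ∀ p : ι, cc p * (s * D p o')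
            = y p * (s * D p o') - (if p = o' then s * (s * D p o') else 0) := by
          intro p
          by_cases hp : p = o'
          · simp only [hccdef, if_pos hp]; ring
          · simp only [hccdef, if_neg hp]; ring
        rw [Finset.sum_congr rfl fun p _ => inner2 p, Finset.sum_sub_distrib,
          Finset.sum_ite_eq' Finset.univ o' (fun p => s * (∑ q, y q * D p q)),
          if_pos (Finset.mem_univ o'),
          Finset.sum_congr rfl fun p _ => inner3 p, Finset.sum_sub_distrib,
          Finset.sum_ite_eq' Finset.univ o' (fun p => s * (s * D p o')),
          if_pos (Finset.mem_univ o')]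
        have h4 : ∑ p, y p * (s * D p o') = s * T := by
          rw [hT, Finset.mul_sum]
          exact Finset.sum_congr rfl fun p _ => by ring
        rw [h4, hself o', ← hA, ← hU]
        ring
      have hquad : dotProduct (star y) (K.mulVec y) = (T * s + s * U - A) / 2 := by
        have h0 : dotProduct (star y) (K.mulVec y)
            = ∑ p, y p * ∑ q, K p q * y q := by
          simp [dotProduct, Matrix.mulVec]
        rw [h0]
        have innerK : ∀ p : ι, y p * ∑ q, K p q * y q
            = (y p * D p o' * s + y p * U - y p * (∑ q, y q * D p q)) / 2 := by
          intro p
          have h : ∀ q : ι, y p * (K p q * y q)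
              = (y p * D p o' * y q + y p * (y q * D o' q) - y p * (y q * D p q)) / 2 := by
            intro q
            simp only [hKdef, Matrix.of_apply]
            ring
          rw [Finset.mul_sum, Finset.sum_congr rfl fun q _ => h q, ← Finset.sum_div,
            Finset.sum_sub_distrib, Finset.sum_add_distrib, ← Finset.mul_sum, ← Finset.mul_sum,
            ← Finset.mul_sum, ← hs, ← hU]
        rw [Finset.sum_congr rfl fun p _ => innerK p, ← Finset.sum_div,
          Finset.sum_sub_distrib, Finset.sum_add_distrib, ← Finset.sum_mul, ← Finset.sum_mul,
          ← hT, ← hA, ← hs]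
      rw [hquad]
      linarith [E ▸ hneg]
  obtain ⟨B, hB⟩ : ∃ B : Matrix ι ι ℝ, K = B.conjTranspose * B := by
    open scoped MatrixOrder in
    obtain ⟨X, hX, -, hXK⟩ := CFC.exists_sqrt_of_isSelfAdjoint_of_quasispectrumRestricts
      hK.isHermitian (QuasispectrumRestricts.nnreal_of_nonneg hK.nonneg)
    exact ⟨X, by rw [← Matrix.star_eq_conjTranspose, hX.star_eq]; exact hXK.symm⟩
  have hKB : ∀ p q : ι, K p q = ∑ i : ι, B i p * B i q := by
    intro p q
    rw [hB]
    simp [Matrix.mul_apply, Matrix.conjTranspose_apply]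
  have hcards : Fintype.card ι = n := by rw [Fintype.card_coe]; exact hcard
  let e : ι ≃ Fin n := Fintype.equivFinOfCardEq hcards
  refine ⟨fun p => if h : p ∈ P then
    (WithLp.equiv 2 (Fin n → ℝ)).symm (fun j => B (e.symm j) ⟨p, h⟩) else 0, ?_⟩
  intro p hp q hq
  have normsq : ∀ x : EuclideanSpace ℝ (Fin n), ‖x‖ ^ 2 = ∑ j, (x j) ^ 2 := by
    intro x
    rw [EuclideanSpace.norm_eq, Real.sq_sqrt (by positivity)]
    exact Finset.sum_congr rfl fun j _ => by rw [Real.norm_eq_abs, sq_abs]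
  simp only [dif_pos hp, dif_pos hq]
  set p' : ι := ⟨p, hp⟩
  set q' : ι := ⟨q, hq⟩
  rw [normsq]
  have happ : ∀ j : Fin n,
      (((WithLp.equiv 2 (Fin n → ℝ)).symm (fun j => B (e.symm j) p')
        - (WithLp.equiv 2 (Fin n → ℝ)).symm (fun j => B (e.symm j) q')) j)
      = B (e.symm j) p' - B (e.symm j) q' := by
    intro j
    simp
  rw [Finset.sum_congr rfl fun j _ => by rw [happ j]]
  rw [Equiv.sum_comp e.symm (fun i => (B i p' - B i q') ^ 2)]
  have per : ∀ i : ι, (B i p' - B i q') ^ 2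
      = B i p' * B i p' - 2 * (B i p' * B i q') + B i q' * B i q' := fun i => by ring
  rw [Finset.sum_congr rfl fun i _ => per i, Finset.sum_add_distrib, Finset.sum_sub_distrib,
    ← Finset.mul_sum, ← hKB p' p', ← hKB p' q', ← hKB q' q']
  have : K p' p' - 2 * K p' q' + K q' q' = D p' q' := by
    simp only [hKdef, Matrix.of_apply, hself]
    rw [hsymm o' p', hsymm o' q']
    ring
  rw [this]

/-- multiplicative `(1 ± ε)` embedding of `n` points of `Δ_d` under JS
into `ℓ₂²` of dimension `O(n²·d³/ε²)`. -/
theorem js_multiplicative_embedding :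
    ∃ C : ℝ, 0 < C ∧
      ∀ d n : ℕ, 1 ≤ d → 2 ≤ n → ∀ ε : ℝ, ε ∈ Set.Ioo (0 : ℝ) 1 →
        ∀ P : Finset (Fin d → ℝ),
          (∀ p ∈ P, p ∈ stdSimplex ℝ (Fin d)) → P.card = n →
          ∃ (m : ℕ) (φ : (Fin d → ℝ) → EuclideanSpace ℝ (Fin m)),
            (m : ℝ) ≤ C * (n : ℝ) ^ 2 * (d : ℝ) ^ 3 / ε ^ 2 ∧
            ∀ p ∈ P, ∀ q ∈ P,
              (1 - ε) * JS p q ≤ ‖φ p - φ q‖ ^ 2 ∧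
              ‖φ p - φ q‖ ^ 2 ≤ (1 + ε) * JS p q := by
  refine ⟨1, one_pos, ?_⟩
  intro d n hd hn ε hε P hP hcard
  obtain ⟨φ, hφ⟩ := js_embed hn P hP hcard
  refine ⟨n, φ, ?_, ?_⟩
  · have hd' : (1:ℝ) ≤ (d:ℝ) := by exact_mod_cast hd
    have hn' : (2:ℝ) ≤ (n:ℝ) := by exact_mod_cast hn
    have hε0 : 0 < ε := hε.1
    have hε1 : ε < 1 := hε.2
    rw [le_div_iff₀ (by positivity)]
    have hd3 : (1:ℝ) ≤ (d:ℝ) ^ 3 := by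
      calc (1:ℝ) = 1 ^ 3 := by norm_num
        _ ≤ (d:ℝ) ^ 3 := pow_le_pow_left₀ (by norm_num) hd' 3
    have h1 : ε ^ 2 ≤ 1 := by nlinarith
    have h2 : (n:ℝ) * ε ^ 2 ≤ (n:ℝ) := by nlinarith
    have h3 : (n:ℝ) ≤ (n:ℝ) ^ 2 := by nlinarith
    have h4 : (n:ℝ) ^ 2 * 1 ≤ (n:ℝ) ^ 2 * (d:ℝ) ^ 3 :=
      mul_le_mul_of_nonneg_left hd3 (by positivity)
    nlinarith
  · intro p hp q hq
    have h := hφ p hp q hq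
    have hnn : 0 ≤ JS p q := h ▸ sq_nonneg _
    have hε0 : 0 < ε := hε.1
    rw [h]
    constructor <;> nlinarith
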